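/- Let α and β be two disjoint r-cycles in S_n. For any point x in the support of α and any point y in the support of β, there exists an involution ω such that ω conjugates α to β⁻¹ and β to α⁻¹, the support of ω is contained in the union of the supports of α and β, and ω swaps x and y. -/

import Mathlib

open Equiv Equiv.Perm Finset

lemma aux_zpow_eq_one_iff {n : ℕ} {f : Equiv.Perm (Fin n)} (hf : f.IsCycle)
    {x : Fin n} (hx : f x ≠ x) {m : ℤ} : f ^ m = 1 ↔ (f ^ m) x = x := by
  constructor
  · intro h; rw [h]; rfl
  · intro h
    have hd : (0:ℤ) < (orderOf f : ℤ) := by exact_mod_cast (orderOf_pos f)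
    have h0 : (0:ℤ) ≤ m % (orderOf f : ℤ) := Int.emod_nonneg m (by omega)
    have heq : f ^ m = f ^ ((m % (orderOf f : ℤ)).toNat) := by
      rw [← zpow_natCast, Int.toNat_of_nonneg h0, zpow_mod_orderOf]
    rw [heq] at h ⊢
    exact (hf.pow_eq_one_iff' hx).2 h

lemma aux_transfer {n : ℕ} {α β : Equiv.Perm (Fin n)} (hα : α.IsCycle) (hβ : β.IsCycle)
    (hord : orderOf α = orderOf β) {x y : Fin n} (hx : α x ≠ x) (hy : β y ≠ y) {i j : ℤ}
    (hij : (α ^ i) x = (α ^ j) x) : (β ^ i) y = (β ^ j) y := by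
  have h1 : (α ^ (i - j)) x = x := by
    have h := congrArg (α ^ (-j) : Equiv.Perm (Fin n)) hij
    rw [← Equiv.Perm.mul_apply, ← Equiv.Perm.mul_apply, ← zpow_add, ← zpow_add,
      neg_add_eq_sub, neg_add_cancel, zpow_zero] at h
    simpa using h
  have h2 : α ^ (i - j) = 1 := (aux_zpow_eq_one_iff hα hx).2 h1
  have h3 : β ^ (i - j) = 1 := by
    rw [← orderOf_dvd_iff_zpow_eq_one] at h2 ⊢
    rwa [← hord]
  have h4 : (β ^ i) = β ^ (i - j) * β ^ j := by rw [← zpow_add]; ring_nf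
  rw [h4, h3, one_mul]

lemma aux_transfer_neg {n : ℕ} {α β : Equiv.Perm (Fin n)} (hα : α.IsCycle) (hβ : β.IsCycle)
    (hord : orderOf α = orderOf β) {x y : Fin n} (hx : α x ≠ x) (hy : β y ≠ y) {i j : ℤ}
    (hij : (α ^ i) x = (α ^ j) x) : (β ^ (-i)) y = (β ^ (-j)) y := by
  have hy2 : β⁻¹ y ≠ y := by
    intro h; apply hy; have := congrArg β h; simpa using this.symm
  have := aux_transfer hα hβ.inv (by rw [hord, orderOf_inv]) hx hy2 hij
  simpa [inv_zpow, ← zpow_neg] using this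

/-- Lemma 2.1 (iii): for disjoint r-cycles α, β and points x ∈ M(α), y ∈ M(β),
there is an involution ω with α^ω = β⁻¹, β^ω = α⁻¹, M(ω) ⊆ M(α) ∪ M(β),
and ω swapping x and y. -/
theorem stmt_2 {n r : ℕ} (α β : Equiv.Perm (Fin n)) (hα : α.IsCycle) (hβ : β.IsCycle)
    (hrα : α.support.card = r) (hrβ : β.support.card = r) (hd : α.Disjoint β)
    (x y : Fin n) (hx : x ∈ α.support) (hy : y ∈ β.support) :
    ∃ ω : Equiv.Perm (Fin n), ω * ω = 1 ∧ ω⁻¹ * α * ω = β⁻¹ ∧ ω⁻¹ * β * ω = α⁻¹ ∧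
      ω.support ⊆ α.support ∪ β.support ∧ ω x = y ∧ ω y = x := by
  classical
  have hx' : α x ≠ x := mem_support.mp hx
  have hy' : β y ≠ y := mem_support.mp hy
  have hord : orderOf α = orderOf β := by rw [hα.orderOf, hβ.orderOf, hrα, hrβ]
  have hdS : Disjoint α.support β.support := Equiv.Perm.disjoint_iff_disjoint_support.mp hd
  let F : Fin n → Fin n := fun z =>
    if hz : z ∈ α.support then
      (β ^ (-(hα.sameCycle hx' (mem_support.mp hz)).choose)) y
    else if hz : z ∈ β.support then
      (α ^ (-(hβ.sameCycle hy' (mem_support.mp hz)).choose)) x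
    else z
  have Fα : ∀ (i : ℤ), F ((α ^ i) x) = (β ^ (-i)) y := by
    intro i
    have hm : (α ^ i) x ∈ α.support := zpow_apply_mem_support.mpr hx
    have hc := (hα.sameCycle hx' (mem_support.mp hm)).choose_spec
    simp only [F, dif_pos hm]
    exact aux_transfer_neg hα hβ hord hx' hy' hc
  have Fβ : ∀ (j : ℤ), F ((β ^ j) y) = (α ^ (-j)) x := by
    intro j
    have hm : (β ^ j) y ∈ β.support := zpow_apply_mem_support.mpr hy
    have hnm : (β ^ j) y ∉ α.support := fun h => Finset.disjoint_left.mp hdS h hm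
    have hc := (hβ.sameCycle hy' (mem_support.mp hm)).choose_spec
    simp only [F, dif_neg hnm, dif_pos hm]
    exact aux_transfer_neg hβ hα hord.symm hy' hx' hc
  have Fout : ∀ z, z ∉ α.support → z ∉ β.support → F z = z := by
    intro z h1 h2; simp only [F, dif_neg h1, dif_neg h2]
  have repα : ∀ z ∈ α.support, ∃ i : ℤ, (α ^ i) x = z := fun z hz =>
    hα.sameCycle hx' (mem_support.mp hz)
  have repβ : ∀ z ∈ β.support, ∃ j : ℤ, (β ^ j) y = z := fun z hz =>
    hβ.sameCycle hy' (mem_support.mp hz)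
  have hinv : Function.Involutive F := by
    intro z
    by_cases h1 : z ∈ α.support
    · obtain ⟨i, rfl⟩ := repα z h1
      rw [Fα i, Fβ (-i), neg_neg]
    · by_cases h2 : z ∈ β.support
      · obtain ⟨j, rfl⟩ := repβ z h2
        rw [Fβ j, Fα (-j), neg_neg]
      · rw [Fout z h1 h2, Fout z h1 h2]
  set ω := hinv.toPerm F with hω
  have hcoe : ∀ w, ω w = F w := fun w => rfl
  have hω1 : ω * ω = 1 := by
    ext z
    simp only [Equiv.Perm.mul_apply, Equiv.Perm.one_apply, hcoe]
    rw [hinv z]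
  have hωinv : ω⁻¹ = ω := inv_eq_of_mul_eq_one_right hω1
  refine ⟨ω, hω1, ?_, ?_, ?_, ?_, ?_⟩
  · ext z
    rw [hωinv]
    simp only [Equiv.Perm.mul_apply, hcoe]
    by_cases h1 : z ∈ α.support
    · obtain ⟨i, rfl⟩ := repα z h1
      have h2 : (β ^ (-i)) y ∈ β.support := zpow_apply_mem_support.mpr hy
      have hfix : α ((β ^ (-i)) y) = (β ^ (-i)) y := by
        rcases hd ((β ^ (-i)) y) with h | h
        · exact h
        · exact absurd h (mem_support.mp h2)
      rw [Fα i, hfix, Fβ (-i), neg_neg]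
      have hm : (α ^ i) x ∈ α.support := zpow_apply_mem_support.mpr hx
      have hfix2 : β ((α ^ i) x) = (α ^ i) x := by
        rcases hd ((α ^ i) x) with h | h
        · exact absurd h (mem_support.mp hm)
        · exact h
      rw [(Equiv.Perm.inv_eq_iff_eq).mpr hfix2.symm]
    · by_cases h2 : z ∈ β.support
      · obtain ⟨j, rfl⟩ := repβ z h2
        rw [Fβ j]
        have e1 : α ((α ^ (-j)) x) = (α ^ (1 + -j)) x := by
          rw [zpow_add, zpow_one, Equiv.Perm.mul_apply]
        rw [e1, Fα (1 + -j)]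
        have e2 : β⁻¹ ((β ^ j) y) = (β ^ (-(1 + -j))) y := by
          rw [← Equiv.Perm.mul_apply, ← zpow_neg_one, ← zpow_add]; ring_nf
        rw [e2]
      · have hαz : α z = z := notMem_support.mp h1
        have hβz : β⁻¹ z = z := by
          rw [Equiv.Perm.inv_eq_iff_eq]; exact (notMem_support.mp h2).symm
        rw [Fout z h1 h2, hαz, Fout z h1 h2, hβz]
  · ext z
    rw [hωinv]
    simp only [Equiv.Perm.mul_apply, hcoe]
    by_cases h2 : z ∈ β.support
    · obtain ⟨j, rfl⟩ := repβ z h2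
      have h1 : (α ^ (-j)) x ∈ α.support := zpow_apply_mem_support.mpr hx
      have hfix : β ((α ^ (-j)) x) = (α ^ (-j)) x := by
        rcases hd ((α ^ (-j)) x) with h | h
        · exact absurd h (mem_support.mp h1)
        · exact h
      rw [Fβ j, hfix, Fα (-j), neg_neg]
      have hm : (β ^ j) y ∈ β.support := zpow_apply_mem_support.mpr hy
      have hfix2 : α ((β ^ j) y) = (β ^ j) y := by
        rcases hd ((β ^ j) y) with h | h
        · exact h
        · exact absurd h (mem_support.mp hm)
      rw [(Equiv.Perm.inv_eq_iff_eq).mpr hfix2.symm]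
    · by_cases h1 : z ∈ α.support
      · obtain ⟨i, rfl⟩ := repα z h1
        rw [Fα i]
        have e1 : β ((β ^ (-i)) y) = (β ^ (1 + -i)) y := by
          rw [zpow_add, zpow_one, Equiv.Perm.mul_apply]
        rw [e1, Fβ (1 + -i)]
        have e2 : α⁻¹ ((α ^ i) x) = (α ^ (-(1 + -i))) x := by
          rw [← Equiv.Perm.mul_apply, ← zpow_neg_one, ← zpow_add]; ring_nf
        rw [e2]
      · have hβz : β z = z := notMem_support.mp h2
        have hαz : α⁻¹ z = z := by
          rw [Equiv.Perm.inv_eq_iff_eq]; exact (notMem_support.mp h1).symm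
        rw [Fout z h1 h2, hβz, Fout z h1 h2, hαz]
  · intro z hz
    by_contra h
    simp only [Finset.mem_union, not_or] at h
    exact (mem_support.mp hz) (Fout z h.1 h.2)
  · show F x = y
    have := Fα 0
    simpa using this
  · show F y = x
    have := Fβ 0
    simpa using this
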